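/- Let u be an arithmetic sequence with ratios b_n, I a translation invariant free ideal of ℕ, and x ∈ [0,1) with supp(x) ∉ I. If there exist real numbers 0 < m₁ ≤ m₂ < 1/2 such that c_n/b_n ∈ [m₁, m₂] for all n ∈ supp(x), then u_n x does not I-converge to 0 in ℝ/ℤ. -/

import Mathlib

/-- Proposition: if `supp(x) ∉ I` and there are `0 < m₁ ≤ m₂ < 1/2` with
`c_n / b_n ∈ [m₁, m₂]` for all `n ∈ supp(x)`, then `u_n x` does not `I`-converge to `0`
mod `1`. -/
theorem stmt_16 (u b c : ℕ → ℕ) (x : ℝ)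
    (hu0 : u 0 = 1) (humono : StrictMono u)
    (hb : ∀ n, u (n + 1) = b (n + 1) * u n)
    (hx0 : 0 ≤ x) (hx1 : x < 1)
    (hc0 : c 0 = 0)
    (hsum : x = ∑' n : ℕ, (c (n + 1) : ℝ) / (u (n + 1) : ℝ))
    (hclt : ∀ n, c (n + 1) < b (n + 1))
    (hcinf : {n : ℕ | c (n + 1) + 1 < b (n + 1)}.Infinite)
    (I : Set (Set ℕ))
    (hne : I.Nonempty)
    (hunion : ∀ A B : Set ℕ, A ∈ I → B ∈ I → A ∪ B ∈ I)
    (hsubset : ∀ A B : Set ℕ, A ⊆ B → B ∈ I → A ∈ I)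
    (hfree : ∀ A : Set ℕ, A.Finite → A ∈ I)
    (htrans : ∀ A ∈ I, ∀ z : ℤ, {m : ℕ | ∃ a ∈ A, (a : ℤ) + z = (m : ℤ)} ∈ I)
    (hS : {n : ℕ | c n ≠ 0} ∉ I)
    (m₁ m₂ : ℝ) (hm₁ : 0 < m₁) (hm₁₂ : m₁ ≤ m₂) (hm₂ : m₂ < 1 / 2)
    (hratio : ∀ n : ℕ, c n ≠ 0 →
      m₁ ≤ (c n : ℝ) / (b n : ℝ) ∧ (c n : ℝ) / (b n : ℝ) ≤ m₂) :
    ¬ ∀ ε : ℝ, 0 < ε →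
      {n : ℕ | ε ≤ |(u n : ℝ) * x - (round ((u n : ℝ) * x) : ℝ)|} ∈ I := by
  intro h
  set g : ℕ → ℝ := fun k => (c (k + 1) : ℝ) / (u (k + 1) : ℝ) with hg
  have hupos : ∀ n, 0 < u n := fun n => by
    have := humono.le_iff_le.mpr (Nat.zero_le n)
    omega
  have hbpos : ∀ n, 0 < b (n + 1) := fun n => by
    have h1 := hb n; have h2 := hupos n; have h3 := hupos (n + 1)
    nlinarith
  have hgnonneg : ∀ k, 0 ≤ g k := fun k => by positivity
  -- term bound: g k ≤ 1/u k - 1/u (k+1)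
  have hterm : ∀ k, g k ≤ 1 / (u k : ℝ) - 1 / (u (k + 1) : ℝ) := by
    intro k
    have hbk := hclt k
    have hu1 : (0:ℝ) < (u (k+1) : ℝ) := by exact_mod_cast hupos (k+1)
    have hu0' : (0:ℝ) < (u k : ℝ) := by exact_mod_cast hupos k
    have hbb : (u (k+1) : ℝ) = (b (k+1) : ℝ) * (u k : ℝ) := by exact_mod_cast hb k
    have hc' : (c (k+1) : ℝ) + 1 ≤ (b (k+1) : ℝ) := by exact_mod_cast hbk
    have key : (c (k+1) : ℝ) / (u (k+1) : ℝ) + 1 / (u (k+1) : ℝ) ≤ 1 / (u k : ℝ) := by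
      rw [← add_div, div_le_div_iff₀ hu1 hu0']
      nlinarith
    simp only [hg]
    linarith
  have htel : ∀ n K, ∑ k ∈ Finset.range K, g (k + n) ≤ 1 / (u n : ℝ) := by
    intro n K
    have h1 : ∑ k ∈ Finset.range K, g (k + n) ≤
        ∑ k ∈ Finset.range K, (1 / (u (k + n) : ℝ) - 1 / (u (k + 1 + n) : ℝ)) := by
      refine Finset.sum_le_sum fun k _ => ?_
      have e : k + 1 + n = k + n + 1 := by omega
      rw [e]
      exact hterm (k + n)
    have h2 : ∑ k ∈ Finset.range K, (1 / (u (k + n) : ℝ) - 1 / (u (k + 1 + n) : ℝ))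
        = 1 / (u n : ℝ) - 1 / (u (K + n) : ℝ) := by
      have := Finset.sum_range_sub' (fun i => 1 / (u (i + n) : ℝ)) K
      simpa using this
    have h3 : (0:ℝ) ≤ 1 / (u (K + n) : ℝ) := by positivity
    linarith
  have hgsum : Summable g := by
    apply summable_of_sum_range_le hgnonneg (c := 1 / (u 0 : ℝ))
    · intro K
      have := htel 0 K
      simpa using this
  have hgsum' : ∀ n, Summable fun k => g (k + n) := fun n =>
    (summable_nat_add_iff n).mpr hgsum
  set R : ℕ → ℝ := fun n => ∑' k, g (k + n) with hR
  have hsplit : ∀ n, x = ∑ k ∈ Finset.range n, g k + R n := fun n =>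
    (hsum.trans (hgsum.sum_add_tsum_nat_add n).symm)
  have hRle : ∀ n, R n ≤ 1 / (u n : ℝ) := fun n =>
    (hgsum' n).tsum_le_of_sum_range_le (htel n)
  have hRge : ∀ n, g n ≤ R n := by
    intro n
    have := (hgsum' n).le_tsum 0 (fun j _ => hgnonneg (j + n))
    simpa using this
  have hRrec : ∀ n, R n = g n + R (n + 1) := by
    intro n
    have h0 := (hgsum' n).sum_add_tsum_nat_add 1
    simp only [Finset.sum_range_one, zero_add] at h0
    have e : (∑' k : ℕ, g (k + 1 + n)) = ∑' k : ℕ, g (k + (n + 1)) :=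
      tsum_congr fun k => by congr 1; omega
    simp only [hR]
    rw [← h0, e]
  -- the integer part
  have hdvd : ∀ m n : ℕ, m ≤ n → u m ∣ u n := by
    intro m n hmn
    induction n with
    | zero => simpa [Nat.le_zero.mp hmn]
    | succ n ih =>
      rcases Nat.lt_or_ge m (n + 1) with h' | h'
      · exact (ih (by omega)).trans ⟨b (n+1), by rw [hb n]; ring⟩
      · have : m = n + 1 := by omega
        simp [this]
  have hint : ∀ n, ∃ N : ℤ, (u n : ℝ) * (∑ k ∈ Finset.range n, g k) = (N : ℝ) := by
    intro n
    refine ⟨((∑ k ∈ Finset.range n, c (k+1) * (u n / u (k+1)) : ℕ) : ℤ), ?_⟩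
    rw [Finset.mul_sum, Int.cast_natCast, Nat.cast_sum]
    apply Finset.sum_congr rfl
    intro k hk
    have hkn : k + 1 ≤ n := Finset.mem_range.mp hk
    have hd := hdvd (k+1) n hkn
    have hne' : ((u (k+1) : ℝ)) ≠ 0 := by
      exact_mod_cast (hupos (k+1)).ne'
    rw [Nat.cast_mul, Nat.cast_div hd hne']
    simp only [hg]
    ring
  -- main estimate
  set ε : ℝ := min m₁ (1 - 2 * m₂) with hε
  have hεpos : 0 < ε := lt_min hm₁ (by linarith)
  have hkey : ∀ n, c (n + 1) ≠ 0 →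
      ε ≤ |(u n : ℝ) * x - (round ((u n : ℝ) * x) : ℝ)| := by
    intro n hcn
    obtain ⟨N, hN⟩ := hint n
    have hun : (0:ℝ) < (u n : ℝ) := by exact_mod_cast hupos n
    have hun1 : (0:ℝ) < (u (n+1) : ℝ) := by exact_mod_cast hupos (n+1)
    have hbn : (0:ℝ) < (b (n+1) : ℝ) := by exact_mod_cast hbpos n
    have hbb : (u (n+1) : ℝ) = (b (n+1) : ℝ) * (u n : ℝ) := by exact_mod_cast hb n
    have hcb := hratio (n+1) hcn
    have hc1 : (1:ℝ) ≤ (c (n+1) : ℝ) := by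
      exact_mod_cast Nat.one_le_iff_ne_zero.mpr hcn
    set y : ℝ := (u n : ℝ) * R n with hy
    -- lower bound
    have hylb : m₁ ≤ y := by
      have h1 : g n ≤ R n := hRge n
      have h2 : (u n : ℝ) * g n ≤ y := by
        exact mul_le_mul_of_nonneg_left h1 hun.le
      have h3 : (u n : ℝ) * g n = (c (n+1) : ℝ) / (b (n+1) : ℝ) := by
        simp only [hg]; rw [hbb]; field_simp
      calc m₁ ≤ (c (n+1) : ℝ) / (b (n+1) : ℝ) := hcb.1
        _ = (u n : ℝ) * g n := h3.symm
        _ ≤ y := h2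
    -- upper bound
    have hyub : y ≤ 2 * m₂ := by
      have h1 : R n = g n + R (n+1) := hRrec n
      have h2 : R (n+1) ≤ 1 / (u (n+1) : ℝ) := hRle (n+1)
      have h3 : y ≤ (u n : ℝ) * (g n + 1 / (u (n+1) : ℝ)) := by
        rw [hy, h1]
        exact mul_le_mul_of_nonneg_left (by linarith) hun.le
      have h4 : (u n : ℝ) * (g n + 1 / (u (n+1) : ℝ))
          = ((c (n+1) : ℝ) + 1) / (b (n+1) : ℝ) := by
        have e1 : g n + 1 / (u (n+1) : ℝ) = ((c (n+1) : ℝ) + 1) / (u (n+1) : ℝ) := by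
          simp only [hg]; rw [← add_div]
        rw [e1, hbb]
        field_simp
      have h5 : ((c (n+1) : ℝ) + 1) / (b (n+1) : ℝ)
          ≤ 2 * ((c (n+1) : ℝ) / (b (n+1) : ℝ)) := by
        rw [← mul_div_assoc]
        gcongr
        linarith
      calc y ≤ ((c (n+1) : ℝ) + 1) / (b (n+1) : ℝ) := by rw [← h4]; exact h3
        _ ≤ 2 * ((c (n+1) : ℝ) / (b (n+1) : ℝ)) := h5
        _ ≤ 2 * m₂ := by linarith [hcb.2]
    -- now the distance to any integer
    have hxeq : (u n : ℝ) * x = (N : ℝ) + y := by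
      rw [hsplit n, mul_add, hN, hy]
    set z : ℤ := round ((u n : ℝ) * x) with hz
    rw [hxeq]
    rcases le_or_gt (z - N) 0 with hj | hj
    · have : ((z : ℝ)) ≤ (N : ℝ) := by exact_mod_cast (by omega : z ≤ N)
      have : ε ≤ (N : ℝ) + y - (z : ℝ) := by
        have hεm : ε ≤ m₁ := min_le_left _ _
        linarith
      calc ε ≤ (N : ℝ) + y - (z : ℝ) := this
        _ ≤ |(N : ℝ) + y - (z : ℝ)| := le_abs_self _
    · have hj1 : (1:ℤ) ≤ z - N := hj
      have : (N : ℝ) + 1 ≤ (z : ℝ) := by exact_mod_cast (by omega : N + 1 ≤ z)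
      have h7 : ε ≤ (z : ℝ) - ((N : ℝ) + y) := by
        have hεm : ε ≤ 1 - 2 * m₂ := min_le_right _ _
        linarith
      calc ε ≤ (z : ℝ) - ((N : ℝ) + y) := h7
        _ ≤ |(z : ℝ) - ((N : ℝ) + y)| := le_abs_self _
        _ = |(N : ℝ) + y - (z : ℝ)| := abs_sub_comm _ _
  -- conclude
  have hA := h ε hεpos
  have hT : {n : ℕ | c (n + 1) ≠ 0} ∈ I :=
    hsubset _ _ (fun n hn => hkey n hn) hA
  have := htrans _ hT 1
  apply hS
  refine hsubset _ _ ?_ this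
  intro m hm
  rcases Nat.exists_eq_succ_of_ne_zero (show m ≠ 0 from fun h0 => hm (h0 ▸ hc0)) with ⟨a, rfl⟩
  exact ⟨a, hm, by push_cast; ring⟩
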